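/- arXiv:2007.14112 — 3 statements merged into one kernel-verified Lean document; each statement's English description precedes it below -/
import Mathlib

section
/- Let X be a complementably homogeneous Banach space and let 𝒥 be a subset of B(X) that is closed under multiplication from the left and from the right by arbitrary operators in B(X). If 𝒥 is a proper subset of B(X), then 𝒥 ⊆ 𝒮_X(X). -/
noncomputable section

open scoped ENNReal NNReal

/-- The space `ℓ_p(ι)` of `p`-summable real families indexed by `ι`, as a type.
For `p = ∞` this is the space of bounded families with the supremum norm. -/
abbrev ellp (ι : Type*) (p : ℝ≥0∞) : Type _ := lp (fun _ : ι => ℝ) p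

/-- The standard unit vector `e_α` of `ℓ_p(ι)`. -/
def stdVec (ι : Type*) (p : ℝ≥0∞) (α : ι) : ellp ι p :=
  letI := Classical.decEq ι
  lp.single p α 1

/-- `c₀(ι)`, realised as the submodule of `ℓ∞(ι)` consisting of those families `f` such
that `{i | ε ≤ |f i|}` is finite for every `ε > 0`; it carries the supremum norm. -/
def c0Submodule (ι : Type*) : Submodule ℝ (ellp ι ∞) where
  carrier := {f | ∀ ε : ℝ, 0 < ε → {i : ι | ε ≤ |f i|}.Finite}
  zero_mem' := by
    intro ε hε
    have h : {i : ι | ε ≤ |(0 : ellp ι ∞) i|} = ∅ := by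
      ext i
      simp [lp.coeFn_zero, not_le.mpr hε]
    rw [h]
    exact Set.finite_empty
  add_mem' := by
    intro f g hf hg ε hε
    have h2 : 0 < ε / 2 := by linarith
    refine ((hf _ h2).union (hg _ h2)).subset ?_
    intro i hi
    simp only [Set.mem_setOf_eq, lp.coeFn_add, Pi.add_apply] at hi
    by_contra hcon
    simp only [Set.mem_union, Set.mem_setOf_eq, not_or, not_le] at hcon
    have habs : |f i + g i| ≤ |f i| + |g i| := abs_add_le _ _
    linarith [hcon.1, hcon.2]
  smul_mem' := by
    intro c f hf ε hε
    rcases eq_or_ne c 0 with rfl | hc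
    · have h : {i : ι | ε ≤ |((0 : ℝ) • f) i|} = ∅ := by
        ext i
        simp [zero_smul, not_le.mpr hε]
      rw [h]
      exact Set.finite_empty
    · have hcpos : 0 < |c| := abs_pos.2 hc
      refine (hf (ε / |c|) (by positivity)).subset ?_
      intro i hi
      simp only [Set.mem_setOf_eq, lp.coeFn_smul, Pi.smul_apply, smul_eq_mul, abs_mul] at hi
      simp only [Set.mem_setOf_eq]
      rw [div_le_iff₀ hcpos]
      linarith [hi, mul_comm (|c|) (|f i|)]

/-- The Banach space `c₀(ι)` with the supremum norm. -/
abbrev c0Space (ι : Type*) : Type _ := ↥(c0Submodule ι)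

/-- `ℓ∞^c(ι)`: the submodule of `ℓ∞(ι)` of countably supported bounded families,
with the supremum norm. -/
def lInftyCSubmodule (ι : Type*) : Submodule ℝ (ellp ι ∞) where
  carrier := {f | {i : ι | f i ≠ 0}.Countable}
  zero_mem' := by
    have h : {i : ι | (0 : ellp ι ∞) i ≠ 0} = ∅ := by
      ext i
      simp [lp.coeFn_zero]
    rw [Set.mem_setOf_eq, h]
    exact Set.countable_empty
  add_mem' := by
    intro f g hf hg
    refine (hf.union hg).mono ?_
    intro i hi
    simp only [Set.mem_setOf_eq, lp.coeFn_add, Pi.add_apply] at hi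
    by_contra hcon
    simp only [Set.mem_union, Set.mem_setOf_eq, not_or, not_not] at hcon
    rw [hcon.1, hcon.2, add_zero] at hi
    exact hi rfl
  smul_mem' := by
    intro c f hf
    refine hf.mono ?_
    intro i hi
    simp only [Set.mem_setOf_eq, lp.coeFn_smul, Pi.smul_apply, smul_eq_mul] at hi
    simp only [Set.mem_setOf_eq]
    intro h
    rw [h, mul_zero] at hi
    exact hi rfl

/-- The Banach space `ℓ∞^c(ι)` with the supremum norm. -/
abbrev lInftyCSpace (ι : Type*) : Type _ := ↥(lInftyCSubmodule ι)

lemma stdVec_mem_c0 (ι : Type*) (α : ι) : stdVec ι ∞ α ∈ c0Submodule ι := by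
  letI := Classical.decEq ι
  intro ε hε
  refine (Set.finite_singleton α).subset ?_
  intro i hi
  simp only [Set.mem_setOf_eq] at hi
  simp only [Set.mem_singleton_iff]
  by_contra h
  rw [stdVec] at hi
  rw [lp.single_apply_ne _ _ _ h] at hi
  simp at hi
  linarith

lemma stdVec_mem_lInftyC (ι : Type*) (α : ι) : stdVec ι ∞ α ∈ lInftyCSubmodule ι := by
  letI := Classical.decEq ι
  refine (Set.countable_singleton α).mono ?_
  intro i hi
  simp only [Set.mem_setOf_eq] at hi
  simp only [Set.mem_singleton_iff]
  by_contra h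
  rw [stdVec, lp.single_apply_ne _ _ _ h] at hi
  exact hi rfl

/-- The standard unit vector `e_α` of `c₀(ι)`. -/
def c0Vec (ι : Type*) (α : ι) : c0Space ι := ⟨stdVec ι ∞ α, stdVec_mem_c0 ι α⟩

/-- The standard unit vector `e_α` of `ℓ∞^c(ι)`. -/
def lInftyCVec (ι : Type*) (α : ι) : lInftyCSpace ι := ⟨stdVec ι ∞ α, stdVec_mem_lInftyC ι α⟩

/-- `T` preserves an isomorphic copy of `Z`: there is a closed subspace `W` of `X`,
isomorphic to `Z`, on which `T` is bounded below. -/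
def PreservesCopy {X : Type*} [NormedAddCommGroup X] [NormedSpace ℝ X]
    (Z : Type*) [NormedAddCommGroup Z] [NormedSpace ℝ Z] (T : X →L[ℝ] X) : Prop :=
  ∃ W : Submodule ℝ X, IsClosed (W : Set X) ∧ Nonempty (W ≃L[ℝ] Z) ∧
    ∃ γ : ℝ, 0 < γ ∧ ∀ w ∈ W, γ * ‖w‖ ≤ ‖T w‖

/-- The set `𝒮_Z(X)` of `Z`-singular operators on `X`. -/
def SZ (Z : Type*) [NormedAddCommGroup Z] [NormedSpace ℝ Z]
    (X : Type*) [NormedAddCommGroup X] [NormedSpace ℝ X] : Set (X →L[ℝ] X) :=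
  {T | ¬ PreservesCopy Z T}

/-- A sequence of operators SOT-converges to `T₀` if it converges pointwise in norm. -/
def SOTConvergesTo {X : Type*} [NormedAddCommGroup X] [NormedSpace ℝ X]
    (T : ℕ → X →L[ℝ] X) (T₀ : X →L[ℝ] X) : Prop :=
  ∀ x : X, Filter.Tendsto (fun n => T n x) Filter.atTop (nhds (T₀ x))

/-- An M-basis `(b_j, f_j)_{j ∈ J}` for a Banach space `X`: a biorthogonal system which is
fundamental (the span of the `b_j` is dense) and total (the span of the `f_j` is
weak*-dense in the dual). -/
structure IsMBasis {X : Type*} [NormedAddCommGroup X] [NormedSpace ℝ X] {J : Type*}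
    (b : J → X) (f : J → X →L[ℝ] ℝ) : Prop where
  biorth_self : ∀ j, f j (b j) = 1
  biorth_ne : ∀ i j, i ≠ j → f j (b i) = 0
  fundamental : Dense (Submodule.span ℝ (Set.range b) : Set X)
  total : Dense ((Submodule.span ℝ (Set.range fun j => (f j : WeakDual ℝ X)) :
    Submodule ℝ (WeakDual ℝ X)) : Set (WeakDual ℝ X))

/-- A family `(x_α)` in `X` is equivalent to the standard unit vector basis of `ℓ_q(ι)`
(with `q` a real exponent). -/
def IsLpBasisEquiv {X ι : Type*} [NormedAddCommGroup X] [NormedSpace ℝ X]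
    (x : ι → X) (q : ℝ) : Prop :=
  ∃ c C : ℝ, 0 < c ∧ 0 < C ∧ ∀ a : ι →₀ ℝ,
    c * (∑ α ∈ a.support, |a α| ^ q) ^ (1 / q) ≤ ‖a.sum fun α r => r • x α‖ ∧
      ‖a.sum fun α r => r • x α‖ ≤ C * (∑ α ∈ a.support, |a α| ^ q) ^ (1 / q)

/-- A family `(x_α)` in `X` is equivalent to the standard unit vector basis of `c₀(ι)`. -/
def IsC0BasisEquiv {X ι : Type*} [NormedAddCommGroup X] [NormedSpace ℝ X]
    (x : ι → X) : Prop :=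
  ∃ c C : ℝ, 0 < c ∧ 0 < C ∧ ∀ a : ι →₀ ℝ,
    c * ((a.support.sup fun α => ‖a α‖₊) : ℝ≥0) ≤ ‖a.sum fun α r => r • x α‖ ∧
      ‖a.sum fun α r => r • x α‖ ≤ C * ((a.support.sup fun α => ‖a α‖₊) : ℝ≥0)

universe u v w x

/-- In a complementably homogeneous Banach space, every proper subset of
`B(X)` closed under two-sided multiplication is contained in `𝒮_X(X)`. -/
theorem subset_SZ_of_complHomog {X : Type u} [NormedAddCommGroup X] [NormedSpace ℝ X]
    [CompleteSpace X] (hinf : ¬ FiniteDimensional ℝ X)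
    (hCH : ∀ Y : Submodule ℝ X, IsClosed (Y : Set X) → Nonempty (Y ≃L[ℝ] X) →
      ∃ W : Submodule ℝ X, W ≤ Y ∧ Nonempty (W ≃L[ℝ] X) ∧
        ∃ P : X →L[ℝ] X, IsIdempotentElem P ∧ LinearMap.range (P : X →ₗ[ℝ] X) = W)
    (J : Set (X →L[ℝ] X))
    (hJmul : ∀ T ∈ J, ∀ A : X →L[ℝ] X, A.comp T ∈ J ∧ T.comp A ∈ J)
    (hJprop : J ≠ Set.univ) :
    J ⊆ SZ X X := by
  intro T hT
  by_contra hTS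
  simp only [SZ, Set.mem_setOf_eq, not_not] at hTS
  obtain ⟨W, hWclosed, ⟨e⟩, γ, hγ, hbb⟩ := hTS
  haveI : CompleteSpace W := hWclosed.completeSpace_coe
  set Tr : W →L[ℝ] X := T.comp W.subtypeL with hTrdef
  have hanti : AntilipschitzWith (⟨γ, hγ.le⟩ : ℝ≥0)⁻¹ Tr := by
    apply Tr.antilipschitz_of_bound
    intro w
    have h := hbb (w : X) w.2
    have hTrw : Tr w = T (w : X) := rfl
    rw [hTrw]
    have hnw : ‖w‖ = ‖(w : X)‖ := rfl
    rw [hnw]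
    change ‖(w : X)‖ ≤ γ⁻¹ * ‖T (w : X)‖
    rw [inv_mul_eq_div, le_div_iff₀ hγ]
    linarith [h]
  have hinj : Function.Injective Tr := hanti.injective
  have hcloSR : IsClosed (Set.range Tr) :=
    hanti.isClosed_range Tr.uniformContinuous
  set Y : Submodule ℝ X := LinearMap.range (Tr : W →ₗ[ℝ] X) with hYdef
  have hYclosed : IsClosed (Y : Set X) := by
    have : (Y : Set X) = Set.range Tr := by
      ext x; simp [hYdef, LinearMap.mem_range, Set.mem_range]
    rw [this]; exact hcloSR
  haveI : CompleteSpace Y := hYclosed.completeSpace_coe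
  set eWY : W ≃L[ℝ] Y := Tr.equivRange hinj hcloSR with heWY
  have heWYcoe : ∀ w : W, ((eWY w : Y) : X) = Tr w := fun w => rfl
  obtain ⟨W', hle, ⟨ψ⟩, P, hPidem, hPrange⟩ :=
    hCH Y hYclosed ⟨eWY.symm.trans e⟩
  -- inclusion W' → Y as a continuous linear map
  set ι : W' →L[ℝ] Y :=
    (Submodule.inclusion hle).mkContinuous 1 (fun x => by
      rw [one_mul]
      rfl) with hι
  have hιcoe : ∀ x : W', ((ι x : Y) : X) = (x : X) := fun x => rfl
  set P' : X →L[ℝ] W' := P.codRestrict W'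
    (fun x => hPrange ▸ LinearMap.mem_range_self (P : X →ₗ[ℝ] X) x) with hP'
  set B : X →L[ℝ] X :=
    W.subtypeL.comp (((eWY.symm : Y →L[ℝ] W)).comp (ι.comp (ψ.symm : X →L[ℝ] W'))) with hB
  set A : X →L[ℝ] X := ((ψ : W' →L[ℝ] X)).comp P' with hA
  have hPfix : ∀ v : X, v ∈ W' → P v = v := by
    intro v hv
    rw [← hPrange] at hv
    obtain ⟨z, hz⟩ := hv
    have := DFunLike.congr_fun hPidem z
    rw [ContinuousLinearMap.mul_apply] at this
    rw [← hz]
    exact this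
  have key : ∀ x : X, A (T (B x)) = x := by
    intro x
    have hTB : T (B x) = ((ψ.symm x : W') : X) := by
      have h1 : T (B x) = Tr (eWY.symm (ι (ψ.symm x))) := rfl
      have h2 : Tr (eWY.symm (ι (ψ.symm x))) = ((eWY (eWY.symm (ι (ψ.symm x))) : Y) : X) :=
        (heWYcoe _).symm
      rw [h1, h2, eWY.apply_symm_apply, hιcoe]
    have hmem : ((ψ.symm x : W') : X) ∈ W' := (ψ.symm x).2
    have hP'TB : P' (T (B x)) = ψ.symm x := by
      apply Subtype.ext
      show P (T (B x)) = ((ψ.symm x : W') : X)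
      rw [hTB]
      exact hPfix _ hmem
    show ψ (P' (T (B x))) = x
    rw [hP'TB, ψ.apply_symm_apply]
  have hid : A.comp (T.comp B) = ContinuousLinearMap.id ℝ X := by
    ext x
    exact key x
  have hidJ : ContinuousLinearMap.id ℝ X ∈ J := by
    rw [← hid]
    exact (hJmul _ (hJmul T hT B).2 A).1
  apply hJprop
  ext S
  simp only [Set.mem_univ, iff_true]
  have := (hJmul _ hidJ S).1
  rwa [ContinuousLinearMap.comp_id] at this
end
end

section
/- Let λ ≥ κ be uncountable cardinals and let p ∈ (1, ∞). Let (x_α)_{α<κ} be a normalised family in ℓ_p(λ) equivalent to the standard unit vector basis of ℓ_p(κ), and let T ∈ B(ℓ_p(λ)). If inf{‖T x_α‖ : α < κ} > 0, then T ∉ 𝒮_{ℓ_p(κ)}(ℓ_p(λ)); that is, there exist a closed subspace W of ℓ_p(λ) isomorphic to ℓ_p(κ) and γ > 0 such that ‖Tw‖ ≥ γ‖w‖ for all w ∈ W. -/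
noncomputable section

open scoped ENNReal NNReal

universe u v w x


section RosenthalAux

open scoped Topology

universe u'

lemma ros_abs_sign_le_one (r : ℝ) : |Real.sign r| ≤ 1 := by
  rcases lt_trichotomy r 0 with h | h | h
  · rw [Real.sign_of_neg h]; norm_num
  · simp [h]
  · rw [Real.sign_of_pos h]; norm_num

lemma ros_sign_mul_self (r : ℝ) : Real.sign r * r = |r| := by
  rcases lt_trichotomy r 0 with h | h | h
  · rw [Real.sign_of_neg h, abs_of_neg h]; ring
  · simp [h]
  · rw [Real.sign_of_pos h, abs_of_pos h]; ring

lemma ros_ellp_sum_apply {ι β : Type*} {p : ℝ≥0∞} [Fact (1 ≤ p)] (s : Finset β)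
    (g : β → ellp ι p) (γ : ι) :
    (((∑ i ∈ s, g i : ellp ι p)) : ι → ℝ) γ = ∑ i ∈ s, (g i : ι → ℝ) γ := by
  classical
  induction s using Finset.cons_induction with
  | empty => simp [lp.coeFn_zero]
  | cons a s ha ih =>
      rw [Finset.sum_cons, Finset.sum_cons, ← ih]
      exact congrFun (lp.coeFn_add (g a) (∑ i ∈ s, g i)) γ

lemma ros_finset_bound {X ι : Type*} [NormedAddCommGroup X] [NormedSpace ℝ X] {x : ι → X}
    {q c C : ℝ} (hq : 0 < q)
    (h : ∀ a : ι →₀ ℝ,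
      c * (∑ α ∈ a.support, |a α| ^ q) ^ (1 / q) ≤ ‖a.sum fun α r => r • x α‖ ∧
        ‖a.sum fun α r => r • x α‖ ≤ C * (∑ α ∈ a.support, |a α| ^ q) ^ (1 / q))
    (s : Finset ι) (b : ι → ℝ) :
    c * (∑ α ∈ s, |b α| ^ q) ^ (1 / q) ≤ ‖∑ α ∈ s, b α • x α‖ ∧
      ‖∑ α ∈ s, b α • x α‖ ≤ C * (∑ α ∈ s, |b α| ^ q) ^ (1 / q) := by
  classical
  set f : ι → ℝ := fun α => if α ∈ s then b α else 0 with hf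
  have hsupp : ∀ α, f α ≠ 0 → α ∈ s := by
    intro α hα; by_contra hc; simp [hf, hc] at hα
  set a : ι →₀ ℝ := Finsupp.onFinset s f hsupp with ha
  have hsub : a.support ⊆ s := Finsupp.support_onFinset_subset
  have h1 : (a.sum fun α r => r • x α) = ∑ α ∈ s, b α • x α := by
    rw [Finsupp.sum_of_support_subset a hsub _ (by intro i _; exact zero_smul ℝ (x i))]
    exact Finset.sum_congr rfl (by intro α hα; simp [ha, hf, hα])
  have h2 : (∑ α ∈ a.support, |a α| ^ q) = ∑ α ∈ s, |b α| ^ q := by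
    rw [Finset.sum_subset hsub]
    · exact Finset.sum_congr rfl (by intro α hα; simp [ha, hf, hα])
    · intro α hα hna
      have : a α = 0 := by simpa using hna
      rw [this, abs_zero, Real.zero_rpow hq.ne']
  have := h a
  rw [h1, h2] at this
  exact this

section
variable {ιl ικ : Type u'} {p : ℝ≥0∞} [Fact (1 ≤ p)]

lemma ros_column_finite (hq : 1 < p.toReal) (hp0 : p ≠ 0)
    (xv : ικ → ellp ιl p) {C : ℝ} (hC : 0 < C)
    (hup : ∀ (s : Finset ικ) (b : ικ → ℝ),
      ‖∑ α ∈ s, b α • xv α‖ ≤ C * (∑ α ∈ s, |b α| ^ p.toReal) ^ (1 / p.toReal))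
    (T : ellp ιl p →L[ℝ] ellp ιl p) (γ : ιl) {ε : ℝ} (hε : 0 < ε) :
    {α : ικ | ε ≤ |(T (xv α) : ιl → ℝ) γ|}.Finite := by
  classical
  set q := p.toReal with hqdef
  have hq0 : 0 < q := lt_trans one_pos hq
  by_contra hinf
  replace hinf : {α : ικ | ε ≤ |(T (xv α) : ιl → ℝ) γ|}.Infinite := hinf
  set K := ‖T‖ * C with hK
  have key : ∀ n : ℕ, ε * n ≤ K * (n : ℝ) ^ (1 / q) := by
    intro n
    obtain ⟨t, hts, htc⟩ := hinf.exists_subset_card_eq n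
    set b : ικ → ℝ := fun α => Real.sign ((T (xv α) : ιl → ℝ) γ) with hb
    have e1 : T (∑ α ∈ t, b α • xv α) = ∑ α ∈ t, b α • T (xv α) := by
      rw [map_sum]
      exact Finset.sum_congr rfl fun α _ => T.map_smul _ _
    have e2 : ((∑ α ∈ t, b α • T (xv α) : ellp ιl p) : ιl → ℝ) γ
        = ∑ α ∈ t, b α * (T (xv α) : ιl → ℝ) γ := by
      rw [ros_ellp_sum_apply]
      exact Finset.sum_congr rfl fun α _ => congrFun (lp.coeFn_smul (b α) (T (xv α))) γ
    have e3 : ∑ α ∈ t, b α * (T (xv α) : ιl → ℝ) γ = ∑ α ∈ t, |(T (xv α) : ιl → ℝ) γ| :=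
      Finset.sum_congr rfl fun α _ => ros_sign_mul_self _
    have lower : ε * n ≤ ∑ α ∈ t, |(T (xv α) : ιl → ℝ) γ| := by
      rw [← htc]
      rw [Finset.card_eq_sum_ones t, Nat.cast_sum]
      rw [Finset.mul_sum]
      refine Finset.sum_le_sum fun α hα => ?_
      have := hts hα
      simpa using this
    have upper : ∑ α ∈ t, |(T (xv α) : ιl → ℝ) γ| ≤ K * (n : ℝ) ^ (1 / q) := by
      rw [← e3, ← e2]
      calc ((∑ α ∈ t, b α • T (xv α) : ellp ιl p) : ιl → ℝ) γ
          ≤ |((∑ α ∈ t, b α • T (xv α) : ellp ιl p) : ιl → ℝ) γ| := le_abs_self _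
        _ ≤ ‖(∑ α ∈ t, b α • T (xv α) : ellp ιl p)‖ := by
            simpa [Real.norm_eq_abs] using
              lp.norm_apply_le_norm hp0 (∑ α ∈ t, b α • T (xv α) : ellp ιl p) γ
        _ = ‖T (∑ α ∈ t, b α • xv α)‖ := by rw [e1]
        _ ≤ ‖T‖ * ‖∑ α ∈ t, b α • xv α‖ := T.le_opNorm _
        _ ≤ ‖T‖ * (C * (∑ α ∈ t, |b α| ^ q) ^ (1 / q)) := by
            exact mul_le_mul_of_nonneg_left (hup t b) (norm_nonneg T)
        _ ≤ ‖T‖ * (C * ((n : ℝ)) ^ (1 / q)) := by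
            refine mul_le_mul_of_nonneg_left (mul_le_mul_of_nonneg_left ?_ hC.le)
              (norm_nonneg T)
            refine Real.rpow_le_rpow (Finset.sum_nonneg fun α _ => Real.rpow_nonneg (abs_nonneg _) _)
              ?_ (by positivity)
            calc (∑ α ∈ t, |b α| ^ q) ≤ ∑ _α ∈ t, (1:ℝ) := by
                  refine Finset.sum_le_sum fun α hα => ?_
                  exact Real.rpow_le_one (abs_nonneg _) (ros_abs_sign_le_one _) hq0.le
              _ = (n:ℝ) := by simp [htc]
        _ = K * (n : ℝ) ^ (1 / q) := by rw [hK]; ring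
    linarith
  have hexp : 0 < 1 - 1 / q := by
    have : 1 / q < 1 := by rw [div_lt_one hq0]; exact hq
    linarith
  have htend : Filter.Tendsto (fun n : ℕ => (n : ℝ) ^ (1 - 1 / q)) Filter.atTop Filter.atTop :=
    (tendsto_rpow_atTop hexp).comp tendsto_natCast_atTop_atTop
  obtain ⟨n, hn1, hn2⟩ :=
    ((htend.eventually_ge_atTop (K / ε + 1)).and (Filter.eventually_ge_atTop 1)).exists
  have hn0 : (0:ℝ) < n := by exact_mod_cast hn2
  have h1 : K / ε < (n : ℝ) ^ (1 - 1 / q) := lt_of_lt_of_le (lt_add_one _) hn1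
  have h2 : K < ε * (n : ℝ) ^ (1 - 1 / q) := by
    rw [div_lt_iff₀ hε] at h1; linarith [h1]
  have h3 : K * (n:ℝ) ^ (1/q) < ε * (n:ℝ) ^ (1 - 1/q) * (n:ℝ) ^ (1/q) :=
    mul_lt_mul_of_pos_right h2 (Real.rpow_pos_of_pos hn0 _)
  have h4 : ε * (n:ℝ) ^ (1 - 1/q) * (n:ℝ) ^ (1/q) = ε * n := by
    rw [mul_assoc, ← Real.rpow_add hn0]
    norm_num
  have := key n
  rw [← h4] at this
  linarith

lemma ros_supp_countable (hq0 : 0 < p.toReal) (f : ellp ιl p) :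
    {γ : ιl | (f : ιl → ℝ) γ ≠ 0}.Countable := by
  have hs : Summable (fun γ => ‖(f : ιl → ℝ) γ‖ ^ p.toReal) := (memℓp_gen_iff hq0).mp (lp.memℓp f)
  refine hs.countable_support.mono ?_
  intro γ hγ
  simp only [Set.mem_setOf_eq] at hγ
  have : (0:ℝ) < ‖(f : ιl → ℝ) γ‖ ^ p.toReal :=
    Real.rpow_pos_of_pos (norm_pos_iff.mpr hγ) _
  simpa [Function.mem_support] using this.ne'

lemma ros_exists_disjoint_subfamily (hq0 : 0 < p.toReal)
    (y : ικ → ellp ιl p)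
    (hcol : ∀ γ : ιl, {α : ικ | (y α : ιl → ℝ) γ ≠ 0}.Countable)
    (hκ : Cardinal.aleph0 < Cardinal.mk ικ) :
    ∃ j : ικ → ικ, Function.Injective j ∧
      ∀ α β : ικ, α ≠ β → ∀ γ : ιl, (y (j α) : ιl → ℝ) γ = 0 ∨ (y (j β) : ιl → ℝ) γ = 0 := by
  classical
  set R : ικ → ικ → Prop :=
    fun α β => ∀ γ : ιl, (y α : ιl → ℝ) γ = 0 ∨ (y β : ιl → ℝ) γ = 0 with hR
  have hRsymm : Symmetric R := by intro a b h γ; exact (h γ).symm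
  set 𝒜 : Set (Set ικ) := {A | A.Pairwise R} with h𝒜
  obtain ⟨m, hm⟩ := zorn_subset 𝒜 (by
    intro c hc hchain
    refine ⟨⋃₀ c, ?_, fun s hs => Set.subset_sUnion_of_mem hs⟩
    intro α hα β hβ hne
    obtain ⟨s₁, hs₁, hαs⟩ := hα
    obtain ⟨s₂, hs₂, hβs⟩ := hβ
    rcases hchain.total hs₁ hs₂ with h | h
    · exact (hc hs₂) (h hαs) hβs hne
    · exact (hc hs₁) hαs (h hβs) hne)
  have hmem : m ∈ 𝒜 := hm.prop
  set bad : Set ικ := ⋃ β : m, ⋃ γ ∈ {γ : ιl | (y ↑β : ιl → ℝ) γ ≠ 0}, {α : ικ | (y α : ιl → ℝ) γ ≠ 0} with hbad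
  have hcover : (Set.univ : Set ικ) ⊆ m ∪ bad := by
    intro α _
    by_cases hαm : α ∈ m
    · exact Or.inl hαm
    · right
      have hnp : ¬ (insert α m).Pairwise R := by
        intro hp
        exact hαm (hm.mem_of_prop_insert (hp : insert α m ∈ 𝒜))
      haveI : Std.Symm R := ⟨fun a b h => hRsymm h⟩; rw [Set.pairwise_insert_of_symm] at hnp
      push_neg at hnp
      obtain ⟨β, hβm, hαβ, hnR⟩ := hnp hmem
      rw [hR] at hnR
      simp only [not_forall, not_or] at hnR
      obtain ⟨γ, h1, h2⟩ := hnR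
      exact Set.mem_iUnion.mpr ⟨⟨β, hβm⟩, Set.mem_biUnion h2 h1⟩
  have hbadcard : Cardinal.mk bad ≤ Cardinal.mk m * Cardinal.aleph0 := by
    refine le_trans (Cardinal.mk_iUnion_le _) ?_
    refine mul_le_mul_right (ciSup_le' fun β => ?_) _
    have hcnt : (⋃ γ ∈ {γ : ιl | (y ↑β : ιl → ℝ) γ ≠ 0}, {α : ικ | (y α : ιl → ℝ) γ ≠ 0}).Countable :=
      Set.Countable.biUnion (ros_supp_countable hq0 (y ↑β)) (fun γ _ => hcol γ)
    haveI := hcnt.to_subtype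
    exact Cardinal.mk_le_aleph0
  have hle2 : Cardinal.mk ικ ≤ Cardinal.mk m + Cardinal.mk m * Cardinal.aleph0 := by
    calc Cardinal.mk ικ = Cardinal.mk (Set.univ : Set ικ) := Cardinal.mk_univ.symm
      _ ≤ Cardinal.mk ((m ∪ bad : Set ικ)) := Cardinal.mk_le_mk_of_subset hcover
      _ ≤ Cardinal.mk m + Cardinal.mk bad := Cardinal.mk_union_le _ _
      _ ≤ _ := add_le_add_right hbadcard _
  have hgem : Cardinal.mk ικ ≤ Cardinal.mk m := by
    rcases le_or_gt Cardinal.aleph0 (Cardinal.mk m) with h | h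
    · rwa [Cardinal.mul_aleph0_eq h, Cardinal.add_eq_self h] at hle2
    · exfalso
      have : Cardinal.mk ικ ≤ Cardinal.aleph0 := by
        refine le_trans hle2 ?_
        calc Cardinal.mk m + Cardinal.mk m * Cardinal.aleph0
            ≤ Cardinal.aleph0 + Cardinal.aleph0 * Cardinal.aleph0 :=
              add_le_add h.le (mul_le_mul_left h.le _)
          _ = Cardinal.aleph0 := by
              rw [Cardinal.aleph0_mul_aleph0, Cardinal.add_eq_self le_rfl]
      exact absurd this (not_le.mpr hκ)
  have hEq : Cardinal.mk ικ = Cardinal.mk m := le_antisymm hgem (Cardinal.mk_set_le m)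
  obtain ⟨e⟩ := Cardinal.eq.mp hEq
  refine ⟨fun α => ↑(e α), Subtype.coe_injective.comp e.injective, ?_⟩
  intro α β hne γ
  have hne2 : (↑(e α) : ικ) ≠ ↑(e β) :=
    fun h => hne (e.injective (Subtype.coe_injective h))
  exact hmem (e α).2 (e β).2 hne2 γ

lemma ros_disjoint_lower (hq0 : 0 < p.toReal) {δ : ℝ} (hδ : 0 ≤ δ)
    (w : ικ → ellp ιl p) (hw : ∀ α, δ ≤ ‖w α‖)
    (hd : ∀ α β : ικ, α ≠ β → ∀ γ : ιl, (w α : ιl → ℝ) γ = 0 ∨ (w β : ιl → ℝ) γ = 0)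
    (s : Finset ικ) (b : ικ → ℝ) :
    δ * (∑ α ∈ s, |b α| ^ p.toReal) ^ (1 / p.toReal) ≤ ‖∑ α ∈ s, b α • w α‖ := by
  classical
  set q := p.toReal with hqdef
  set F : ellp ιl p := ∑ α ∈ s, b α • w α with hF
  have hpt : ∀ γ : ιl, ‖(F : ιl → ℝ) γ‖ ^ q = ∑ α ∈ s, |b α| ^ q * ‖(w α : ιl → ℝ) γ‖ ^ q := by
    intro γ
    have hFγ : (F : ιl → ℝ) γ = ∑ α ∈ s, b α * (w α : ιl → ℝ) γ := by
      rw [hF, ros_ellp_sum_apply]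
      exact Finset.sum_congr rfl fun α _ => congrFun (lp.coeFn_smul (b α) (w α)) γ
    by_cases hex : ∃ α₀ ∈ s, (w α₀ : ιl → ℝ) γ ≠ 0
    · obtain ⟨α₀, hα₀s, hα₀⟩ := hex
      have h1 : (F : ιl → ℝ) γ = b α₀ * (w α₀ : ιl → ℝ) γ := by
        rw [hFγ]
        refine Finset.sum_eq_single_of_mem α₀ hα₀s fun β hβ hne => ?_
        rcases hd β α₀ hne γ with h | h
        · rw [h, mul_zero]
        · exact absurd h hα₀
      have h2 : ∑ α ∈ s, |b α| ^ q * ‖(w α : ιl → ℝ) γ‖ ^ q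
          = |b α₀| ^ q * ‖(w α₀ : ιl → ℝ) γ‖ ^ q := by
        refine Finset.sum_eq_single_of_mem α₀ hα₀s fun β hβ hne => ?_
        rcases hd β α₀ hne γ with h | h
        · rw [h, norm_zero, Real.zero_rpow hq0.ne', mul_zero]
        · exact absurd h hα₀
      rw [h1, h2, Real.norm_eq_abs, abs_mul,
        Real.mul_rpow (abs_nonneg _) (abs_nonneg _), Real.norm_eq_abs]
    · push_neg at hex
      have h1 : (F : ιl → ℝ) γ = 0 := by
        rw [hFγ]
        exact Finset.sum_eq_zero fun α hα => by rw [hex α hα, mul_zero]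
      rw [h1, norm_zero, Real.zero_rpow hq0.ne']
      exact (Finset.sum_eq_zero fun α hα => by
        rw [hex α hα, norm_zero, Real.zero_rpow hq0.ne', mul_zero]).symm
  have hnorm : ‖F‖ ^ q = ∑ α ∈ s, |b α| ^ q * ‖w α‖ ^ q := by
    rw [lp.norm_rpow_eq_tsum hq0 F]
    calc ∑' γ, ‖(F : ιl → ℝ) γ‖ ^ q
        = ∑' γ, ∑ α ∈ s, |b α| ^ q * ‖(w α : ιl → ℝ) γ‖ ^ q := by
          exact tsum_congr hpt
      _ = ∑ α ∈ s, ∑' γ, |b α| ^ q * ‖(w α : ιl → ℝ) γ‖ ^ q := by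
          refine Summable.tsum_finsetSum fun α hα => ?_
          exact ((lp.hasSum_norm hq0 (w α)).summable).mul_left _
      _ = ∑ α ∈ s, |b α| ^ q * ‖w α‖ ^ q := by
          refine Finset.sum_congr rfl fun α hα => ?_
          rw [tsum_mul_left, ← lp.norm_rpow_eq_tsum hq0 (w α)]
  have hge : δ ^ q * (∑ α ∈ s, |b α| ^ q) ≤ ‖F‖ ^ q := by
    rw [hnorm, Finset.mul_sum]
    refine Finset.sum_le_sum fun α hα => ?_
    rw [mul_comm (|b α| ^ q) (‖w α‖ ^ q)]
    exact mul_le_mul_of_nonneg_right (Real.rpow_le_rpow hδ (hw α) hq0.le)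
      (Real.rpow_nonneg (abs_nonneg _) _)
  have hS : (0:ℝ) ≤ ∑ α ∈ s, |b α| ^ q :=
    Finset.sum_nonneg fun α _ => Real.rpow_nonneg (abs_nonneg _) _
  calc δ * (∑ α ∈ s, |b α| ^ q) ^ (1 / q)
      = (δ ^ q * (∑ α ∈ s, |b α| ^ q)) ^ (1 / q) := by
        rw [Real.mul_rpow (Real.rpow_nonneg hδ _) hS, ← Real.rpow_mul hδ,
          mul_one_div_cancel hq0.ne', Real.rpow_one]
    _ ≤ (‖F‖ ^ q) ^ (1 / q) :=
        Real.rpow_le_rpow (by positivity) hge (by positivity)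
    _ = ‖F‖ := by
        rw [← Real.rpow_mul (norm_nonneg _), mul_one_div_cancel hq0.ne', Real.rpow_one]

lemma ros_build_copy (hq0 : 0 < p.toReal)
    (u : ικ → ellp ιl p) (T : ellp ιl p →L[ℝ] ellp ιl p) {c C δ : ℝ}
    (hc : 0 < c) (hC : 0 < C) (hδ : 0 < δ)
    (hlo : ∀ (s : Finset ικ) (b : ικ → ℝ),
      c * (∑ α ∈ s, |b α| ^ p.toReal) ^ (1 / p.toReal) ≤ ‖∑ α ∈ s, b α • u α‖)
    (hup : ∀ (s : Finset ικ) (b : ικ → ℝ),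
      ‖∑ α ∈ s, b α • u α‖ ≤ C * (∑ α ∈ s, |b α| ^ p.toReal) ^ (1 / p.toReal))
    (hT : ∀ (s : Finset ικ) (b : ικ → ℝ),
      δ * (∑ α ∈ s, |b α| ^ p.toReal) ^ (1 / p.toReal) ≤ ‖T (∑ α ∈ s, b α • u α)‖) :
    PreservesCopy (ellp ικ p) T := by
  classical
  set q := p.toReal with hqdef
  have hsum : ∀ b : ellp ικ p, Summable (fun α => (b : ικ → ℝ) α • u α) := by
    intro b
    have hbq : Summable (fun α => |(b : ικ → ℝ) α| ^ q) := by
      have := (lp.hasSum_norm hq0 b).summable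
      simpa [Real.norm_eq_abs] using this
    rw [summable_iff_vanishing]
    intro e he
    obtain ⟨ε, hε, hball⟩ := Metric.mem_nhds_iff.mp he
    obtain ⟨s₀, hs₀⟩ := (summable_iff_vanishing.mp hbq) (Metric.ball 0 ((ε / (C + 1)) ^ q))
      (Metric.ball_mem_nhds 0 (by positivity))
    refine ⟨s₀, fun t ht => ?_⟩
    have h1 := hs₀ t ht
    rw [Metric.mem_ball, Real.dist_eq, sub_zero] at h1
    have hS : (0:ℝ) ≤ ∑ α ∈ t, |(b : ικ → ℝ) α| ^ q :=
      Finset.sum_nonneg fun α _ => Real.rpow_nonneg (abs_nonneg _) _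
    have h2 : ∑ α ∈ t, |(b : ικ → ℝ) α| ^ q < (ε / (C + 1)) ^ q := by
      rwa [abs_of_nonneg hS] at h1
    apply hball
    rw [Metric.mem_ball, dist_zero_right]
    calc ‖∑ α ∈ t, (b : ικ → ℝ) α • u α‖
        ≤ C * (∑ α ∈ t, |(b : ικ → ℝ) α| ^ q) ^ (1 / q) := hup t _
      _ ≤ C * (((ε / (C + 1)) ^ q) ^ (1 / q)) := by
          refine mul_le_mul_of_nonneg_left
            (Real.rpow_le_rpow hS h2.le (by positivity)) hC.le
      _ = C * (ε / (C + 1)) := by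
          rw [← Real.rpow_mul (by positivity), mul_one_div_cancel hq0.ne', Real.rpow_one]
      _ < ε := by
          rw [mul_div_assoc']
          rw [div_lt_iff₀ (by positivity)]
          nlinarith
  set Φ₀ : ellp ικ p →ₗ[ℝ] ellp ιl p :=
    { toFun := fun b => ∑' α, (b : ικ → ℝ) α • u α
      map_add' := by
        intro b b'
        have h1 : (fun α => ((b + b' : ellp ικ p) : ικ → ℝ) α • u α)
            = fun α => (b : ικ → ℝ) α • u α + (b' : ικ → ℝ) α • u α := by
          funext α
          rw [congrFun (lp.coeFn_add b b') α]
          simp [add_smul]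
        dsimp only
        rw [h1]
        exact Summable.tsum_add (hsum b) (hsum b')
      map_smul' := by
        intro r b
        have h1 : (fun α => ((r • b : ellp ικ p) : ικ → ℝ) α • u α)
            = fun α => r • ((b : ικ → ℝ) α • u α) := by
          funext α
          rw [congrFun (lp.coeFn_smul r b) α]
          simp [smul_smul]
        dsimp only
        rw [h1]
        simpa using Summable.tsum_const_smul r (hsum b) } with hΦ₀
  have htendS : ∀ b : ellp ικ p,
      Filter.Tendsto (fun s : Finset ικ => (∑ α ∈ s, |(b : ικ → ℝ) α| ^ q) ^ (1 / q))
        Filter.atTop (𝓝 ‖b‖) := by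
    intro b
    have h1 : HasSum (fun α => |(b : ικ → ℝ) α| ^ q) (‖b‖ ^ q) := by
      simpa [Real.norm_eq_abs] using lp.hasSum_norm hq0 b
    have h2 : Filter.Tendsto (fun s : Finset ικ => ∑ α ∈ s, |(b : ικ → ℝ) α| ^ q)
        Filter.atTop (𝓝 (‖b‖ ^ q)) := h1
    have h3 : ContinuousAt (fun x : ℝ => x ^ (1 / q)) (‖b‖ ^ q) :=
      Real.continuousAt_rpow_const _ _ (Or.inr (by positivity))
    have h4 := h3.tendsto.comp h2
    have h5 : (‖b‖ ^ q) ^ (1 / q) = ‖b‖ := by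
      rw [← Real.rpow_mul (norm_nonneg _), mul_one_div_cancel hq0.ne', Real.rpow_one]
    rwa [Function.comp_def, h5] at h4
  have htends : ∀ b : ellp ικ p,
      Filter.Tendsto (fun s : Finset ικ => ∑ α ∈ s, (b : ικ → ℝ) α • u α)
        Filter.atTop (𝓝 (Φ₀ b)) := fun b => (hsum b).hasSum
  have hΦup : ∀ b : ellp ικ p, ‖Φ₀ b‖ ≤ C * ‖b‖ := by
    intro b
    exact le_of_tendsto_of_tendsto' (htends b).norm ((htendS b).const_mul C)
      (fun s => hup s _)
  have hΦlo : ∀ b : ellp ικ p, c * ‖b‖ ≤ ‖Φ₀ b‖ := by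
    intro b
    exact le_of_tendsto_of_tendsto' ((htendS b).const_mul c) (htends b).norm
      (fun s => hlo s _)
  have hTlo : ∀ b : ellp ικ p, δ * ‖b‖ ≤ ‖T (Φ₀ b)‖ := by
    intro b
    have h1 : Filter.Tendsto (fun s : Finset ικ => T (∑ α ∈ s, (b : ικ → ℝ) α • u α))
        Filter.atTop (𝓝 (T (Φ₀ b))) := (T.continuous.tendsto _).comp (htends b)
    exact le_of_tendsto_of_tendsto' ((htendS b).const_mul δ) h1.norm (fun s => hT s _)
  set Φ : ellp ικ p →L[ℝ] ellp ιl p := Φ₀.mkContinuous C hΦup with hΦdef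
  have hΦapp : ∀ b, Φ b = Φ₀ b := fun b => rfl
  have hanti : AntilipschitzWith ⟨c⁻¹, by positivity⟩ Φ := by
    refine Φ.antilipschitz_of_bound fun b => ?_
    have h1 := hΦlo b
    calc ‖b‖ = c⁻¹ * (c * ‖b‖) := by field_simp
      _ ≤ c⁻¹ * ‖Φ₀ b‖ := mul_le_mul_of_nonneg_left h1 (by positivity)
      _ = (⟨c⁻¹, by positivity⟩ : ℝ≥0) * ‖Φ b‖ := by rw [hΦapp]
  have hinj : Function.Injective Φ := hanti.injective
  have hclo : IsClosed (Set.range Φ) := hanti.isClosed_range Φ.uniformContinuous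
  set E := Φ.equivRange hinj hclo
  refine ⟨LinearMap.range Φ, ?_, ⟨by exact E.symm⟩, δ / C, by positivity, ?_⟩
  · have : ((LinearMap.range (Φ : ellp ικ p →ₗ[ℝ] ellp ιl p) : Submodule ℝ (ellp ιl p)) : Set (ellp ιl p))
        = Set.range Φ := by
      ext x; simp
    rwa [this]
  · rintro w ⟨b, rfl⟩
    have h1 := hTlo b
    have h2 := hΦup b
    calc δ / C * ‖Φ b‖ ≤ δ / C * (C * ‖b‖) := by
          refine mul_le_mul_of_nonneg_left ?_ (by positivity)
          rw [hΦapp]; exact h2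
      _ = δ * ‖b‖ := by field_simp
      _ ≤ ‖T (Φ b)‖ := by rw [hΦapp]; exact h1
end

end RosenthalAux

/-- (Rosenthal-type result for `ℓ_p(λ)`, `1 < p < ∞`.) -/
theorem preservesCopy_of_inf_pos {ιl ικ : Type u}
    (hle : Cardinal.mk ικ ≤ Cardinal.mk ιl)
    (hκ : Cardinal.aleph0 < Cardinal.mk ικ) (hlam : Cardinal.aleph0 < Cardinal.mk ιl)
    (p : ℝ≥0∞) [Fact (1 ≤ p)] (hp1 : 1 < p) (hp2 : p ≠ ∞)
    (xv : ικ → ellp ιl p) (hnorm : ∀ α, ‖xv α‖ = 1) (hx : IsLpBasisEquiv xv p.toReal)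
    (T : ellp ιl p →L[ℝ] ellp ιl p) (hinf : 0 < ⨅ α : ικ, ‖T (xv α)‖) :
    PreservesCopy (ellp ικ p) T := by
  classical
  set q := p.toReal with hqdef
  have hq : 1 < q := by
    have h := ENNReal.toReal_strict_mono hp2 hp1
    simpa using h
  have hq0 : 0 < q := lt_trans one_pos hq
  have hp0 : p ≠ 0 := (lt_trans zero_lt_one hp1).ne'
  obtain ⟨c, C, hc, hC, hbnd⟩ := hx
  have hxs := fun s b => ros_finset_bound (x := xv) hq0 hbnd s b
  have hxup : ∀ (s : Finset ικ) (b : ικ → ℝ),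
      ‖∑ α ∈ s, b α • xv α‖ ≤ C * (∑ α ∈ s, |b α| ^ q) ^ (1 / q) :=
    fun s b => (hxs s b).2
  set y : ικ → ellp ιl p := fun α => T (xv α) with hy
  set δ : ℝ := ⨅ α : ικ, ‖T (xv α)‖ with hδ
  have hδpos : 0 < δ := hinf
  have hδle : ∀ α, δ ≤ ‖y α‖ := by
    intro α
    exact ciInf_le ⟨0, by rintro x ⟨α', rfl⟩; exact norm_nonneg _⟩ α
  have hcol : ∀ γ : ιl, {α : ικ | (y α : ιl → ℝ) γ ≠ 0}.Countable := by
    intro γ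
    have hsub : {α : ικ | (y α : ιl → ℝ) γ ≠ 0}
        ⊆ ⋃ n : ℕ, {α : ικ | 1 / ((n:ℝ) + 1) ≤ |(T (xv α) : ιl → ℝ) γ|} := by
      intro α hα
      obtain ⟨n, hn⟩ := exists_nat_one_div_lt (abs_pos.mpr hα)
      exact Set.mem_iUnion.mpr ⟨n, hn.le⟩
    refine Set.Countable.mono hsub ?_
    refine Set.countable_iUnion fun n => Set.Finite.countable ?_
    exact ros_column_finite hq hp0 xv hC hxup T γ (by positivity)
  obtain ⟨j, hjinj, hjdisj⟩ := ros_exists_disjoint_subfamily hq0 y hcol hκ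
  set u : ικ → ellp ιl p := fun α => xv (j α) with hu
  -- transfer finset bounds along j
  have hkey : ∀ (s : Finset ικ) (b : ικ → ℝ), ∃ (t : Finset ικ) (F : ικ → ℝ),
      (∑ α ∈ s, b α • xv (j α)) = (∑ β ∈ t, F β • xv β) ∧
      (∑ α ∈ s, |b α| ^ q) = (∑ β ∈ t, |F β| ^ q) := by
    intro s b
    set F : ικ → ℝ := fun β => if h : ∃ α, j α = β then b h.choose else 0 with hF
    have hFj : ∀ α, F (j α) = b α := by
      intro α
      have hex : ∃ α', j α' = j α := ⟨α, rfl⟩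
      rw [hF]
      simp only [dif_pos hex]
      exact congrArg b (hjinj hex.choose_spec)
    refine ⟨s.map ⟨j, hjinj⟩, F, ?_, ?_⟩
    · rw [Finset.sum_map]
      exact Finset.sum_congr rfl fun α _ => by rw [Function.Embedding.coeFn_mk, hFj]
    · rw [Finset.sum_map]
      exact Finset.sum_congr rfl fun α _ => by rw [Function.Embedding.coeFn_mk, hFj]
  have hulo : ∀ (s : Finset ικ) (b : ικ → ℝ),
      c * (∑ α ∈ s, |b α| ^ q) ^ (1 / q) ≤ ‖∑ α ∈ s, b α • u α‖ := by
    intro s b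
    obtain ⟨t, F, h1, h2⟩ := hkey s b
    rw [hu]
    simp only []
    rw [h1, h2]
    exact (hxs t F).1
  have huup : ∀ (s : Finset ικ) (b : ικ → ℝ),
      ‖∑ α ∈ s, b α • u α‖ ≤ C * (∑ α ∈ s, |b α| ^ q) ^ (1 / q) := by
    intro s b
    obtain ⟨t, F, h1, h2⟩ := hkey s b
    rw [hu]
    simp only []
    rw [h1, h2]
    exact (hxs t F).2
  have hTlo : ∀ (s : Finset ικ) (b : ικ → ℝ),
      δ * (∑ α ∈ s, |b α| ^ q) ^ (1 / q) ≤ ‖T (∑ α ∈ s, b α • u α)‖ := by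
    intro s b
    have h1 : T (∑ α ∈ s, b α • u α) = ∑ α ∈ s, b α • y (j α) := by
      rw [map_sum]
      exact Finset.sum_congr rfl fun α _ => T.map_smul _ _
    rw [h1]
    exact ros_disjoint_lower hq0 hδpos.le (fun α => y (j α))
      (fun α => hδle (j α)) hjdisj s b
  exact ros_build_copy hq0 u T hc hC hδpos hulo huup hTlo
end
end

section
/- Let X be a Banach space and suppose W is a non-zero complemented subspace of X such that W has the SHAI property. Let Y be a non-zero Banach space and let ψ : B(X) → B(Y) be a surjective algebra homomorphism that is not injective. Then Ḡ_W(X) ⊆ Ker(ψ), i.e. ψ vanishes on every operator in the closed linear span of the operators on X that factor through W. -/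
noncomputable section

open scoped ENNReal NNReal

universe u v w x

lemma buildTheta {X : Type*} {Y : Type*} [NormedAddCommGroup X] [NormedSpace ℝ X]
    [NormedAddCommGroup Y] [NormedSpace ℝ Y]
    (W : Submodule ℝ X) (Z : Submodule ℝ Y)
    (G : (↥W →L[ℝ] ↥W) → (X →L[ℝ] X))
    (ψ : (X →L[ℝ] X) →ₐ[ℝ] (Y →L[ℝ] Y))
    (P : X →L[ℝ] X)
    (hG_one : G 1 = P) (hG_mul : ∀ A B, G (A * B) = G A * G B)
    (hG_add : ∀ A B, G (A + B) = G A + G B)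
    (hG_smul : ∀ (c : ℝ) A, G (c • A) = c • G A)
    (hG_zero : G 0 = 0)
    (hZone : ∀ z : ↥Z, ψ P (z : Y) = (z : Y))
    (hGmem : ∀ A (z : ↥Z), ψ (G A) (z : Y) ∈ Z) :
    ∃ θ : (↥W →L[ℝ] ↥W) →ₐ[ℝ] (↥Z →L[ℝ] ↥Z),
      ∀ A (z : ↥Z), ((θ A z : ↥Z) : Y) = ψ (G A) (z : Y) := by
  let θfun : (↥W →L[ℝ] ↥W) → (↥Z →L[ℝ] ↥Z) := fun A =>
    ((ψ (G A)).comp Z.subtypeL).codRestrict Z (fun z => hGmem A z)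
  have hθapp : ∀ A (z : ↥Z), ((θfun A z : ↥Z) : Y) = ψ (G A) (z : Y) := fun A z =>
    ContinuousLinearMap.coe_codRestrict_apply _ _ _ _
  refine ⟨AlgHom.mk'
    { toFun := θfun
      map_one' := ?_
      map_mul' := ?_
      map_zero' := ?_
      map_add' := ?_ } ?_, fun A z => hθapp A z⟩
  · ext z
    rw [hθapp, hG_one]
    show ψ P (z : Y) = (((1 : ↥Z →L[ℝ] ↥Z) z : ↥Z) : Y)
    rw [ContinuousLinearMap.one_apply]
    exact hZone z
  · intro A B
    ext z
    rw [ContinuousLinearMap.mul_apply]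
    push_cast
    rw [hθapp, hθapp, hG_mul, map_mul, ContinuousLinearMap.mul_apply, hθapp]
  · ext z
    rw [hθapp, hG_zero, map_zero]
    simp
  · intro A B
    ext z
    rw [ContinuousLinearMap.add_apply]
    push_cast
    rw [hθapp, hθapp, hθapp, hG_add, map_add, ContinuousLinearMap.add_apply]
  · intro c A
    show θfun (c • A) = c • θfun A
    ext z
    rw [ContinuousLinearMap.smul_apply]
    push_cast
    rw [hθapp, hθapp, hG_smul, map_smul, ContinuousLinearMap.smul_apply]

set_option maxHeartbeats 1000000 in
/-- If `W` is a non-zero complemented subspace of `X` with the SHAI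
property, then every surjective non-injective algebra homomorphism `B(X) → B(Y)`
vanishes on the ideal of operators approximately factoring through `W`. -/
theorem approxFactor_subset_ker {X : Type u} [NormedAddCommGroup X] [NormedSpace ℝ X]
    [CompleteSpace X] (W : Submodule ℝ X) (hW : W ≠ ⊥)
    (hWcompl : ∃ P : X →L[ℝ] X, IsIdempotentElem P ∧ LinearMap.range (P : X →ₗ[ℝ] X) = W)
    (hSHAI : ∀ (Z : Type v) [NormedAddCommGroup Z] [NormedSpace ℝ Z] [CompleteSpace Z]
      [Nontrivial Z] (θ : (W →L[ℝ] W) →ₐ[ℝ] (Z →L[ℝ] Z)),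
        Function.Surjective θ → Function.Injective θ)
    (Y : Type v) [NormedAddCommGroup Y] [NormedSpace ℝ Y] [CompleteSpace Y] [Nontrivial Y]
    (ψ : (X →L[ℝ] X) →ₐ[ℝ] (Y →L[ℝ] Y)) (hsurj : Function.Surjective ψ)
    (hninj : ¬ Function.Injective ψ) :
    ∀ g ∈ closure ((Submodule.span ℝ {g : X →L[ℝ] X |
        ∃ (T : X →L[ℝ] W) (S : (W : Type u) →L[ℝ] X), g = S.comp T} :
          Submodule ℝ (X →L[ℝ] X)) : Set (X →L[ℝ] X)),
      ψ g = 0 := by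
  classical
  obtain ⟨P, hPidem, hPrange⟩ := hWcompl
  have hPmem : ∀ x : X, P x ∈ W := fun x => by
    rw [← hPrange]; exact LinearMap.mem_range.mpr ⟨x, rfl⟩
  have hPP : ∀ y : X, P (P y) = P y := fun y => by
    have := DFunLike.congr_fun hPidem y
    simpa [ContinuousLinearMap.mul_apply] using this
  have hPfix : ∀ w ∈ W, P w = w := by
    intro w hw
    rw [← hPrange] at hw
    obtain ⟨x, rfl⟩ := LinearMap.mem_range.mp hw
    exact hPP x
  set Pc : X →L[ℝ] ↥W := P.codRestrict W hPmem with hPcdef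
  have hPc_apply : ∀ x : X, ((Pc x : ↥W) : X) = P x := fun x =>
    ContinuousLinearMap.coe_codRestrict_apply _ _ _ _
  have hPcι : ∀ w : ↥W, Pc (w : X) = w := fun w =>
    Subtype.ext (by rw [hPc_apply]; exact hPfix _ w.2)
  have hPι : ∀ w : ↥W, P (w : X) = (w : X) := fun w => hPfix _ w.2
  -- the basic "compression" map
  set G : (↥W →L[ℝ] ↥W) → (X →L[ℝ] X) :=
    fun A => (W.subtypeL.comp A).comp Pc with hGdef
  have hG_apply : ∀ A (x : X), G A x = ((A (Pc x) : ↥W) : X) := fun A x => rfl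
  -- Step 1 : ψ P = 0
  have hψP : ψ P = 0 := by
    by_contra he
    set e : Y →L[ℝ] Y := ψ P with hedef
    have he_idem : e * e = e := by rw [hedef, ← map_mul]; exact congrArg ψ hPidem
    have hee : ∀ y : Y, e (e y) = e y := fun y => by
      have := DFunLike.congr_fun he_idem y
      simpa [ContinuousLinearMap.mul_apply] using this
    set Z : Submodule ℝ Y := LinearMap.ker (((1 : Y →L[ℝ] Y) - e : Y →L[ℝ] Y) : Y →ₗ[ℝ] Y) with hZdef
    have hZmem : ∀ y : Y, y ∈ Z ↔ e y = y := by
      intro y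
      rw [hZdef, LinearMap.mem_ker]
      constructor
      · intro hy
        have h1 : ((1 : Y →L[ℝ] Y) - e) y = 0 := hy
        rw [ContinuousLinearMap.sub_apply, ContinuousLinearMap.one_apply,
          sub_eq_zero] at h1
        exact h1.symm
      · intro hy
        show ((1 : Y →L[ℝ] Y) - e) y = 0
        rw [ContinuousLinearMap.sub_apply, ContinuousLinearMap.one_apply, hy, sub_self]
    haveI : CompleteSpace ↥Z := (ContinuousLinearMap.isClosed_ker _).completeSpace_coe
    obtain ⟨y0, hy0⟩ : ∃ y, e y ≠ 0 := by
      by_contra h; push_neg at h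
      exact he (ContinuousLinearMap.ext fun y => by simp [h y])
    haveI : Nontrivial ↥Z := by
      refine ⟨⟨⟨e y0, (hZmem _).mpr (hee y0)⟩, 0, ?_⟩⟩
      intro hcon
      exact hy0 (by simpa [Subtype.ext_iff] using hcon)
    have hPG : ∀ A, P * G A = G A := by
      intro A
      ext x
      rw [ContinuousLinearMap.mul_apply]
      show P ((A (Pc x) : ↥W) : X) = ((A (Pc x) : ↥W) : X)
      exact hPι _
    have hGmemZ : ∀ (A : ↥W →L[ℝ] ↥W) (z : ↥Z), ψ (G A) ((z : Y)) ∈ Z := by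
      intro A z
      rw [hZmem]
      have h1 := DFunLike.congr_fun (congrArg ψ (hPG A)) (z : Y)
      rw [map_mul] at h1
      simpa [ContinuousLinearMap.mul_apply] using h1
    set θfun : (↥W →L[ℝ] ↥W) → (↥Z →L[ℝ] ↥Z) := fun A =>
      ((ψ (G A)).comp Z.subtypeL).codRestrict Z (fun z => hGmemZ A z) with hθfundef
    have hθapp : ∀ A (z : ↥Z), ((θfun A z : ↥Z) : Y) = ψ (G A) (z : Y) := fun A z =>
      ContinuousLinearMap.coe_codRestrict_apply _ _ _ _
    -- algebraic identities for G
    have hG_one : G 1 = P := by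
      ext x
      show ((((1 : ↥W →L[ℝ] ↥W)) (Pc x) : ↥W) : X) = P x
      rw [ContinuousLinearMap.one_apply, hPc_apply]
    have hG_mul : ∀ A B, G (A * B) = G A * G B := by
      intro A B
      ext x
      rw [ContinuousLinearMap.mul_apply]
      show (((A * B) (Pc x) : ↥W) : X) = ((A (Pc ((B (Pc x) : ↥W) : X)) : ↥W) : X)
      rw [hPcι, ContinuousLinearMap.mul_apply]
    have hG_add : ∀ A B, G (A + B) = G A + G B := by
      intro A B
      ext x
      rw [ContinuousLinearMap.add_apply]
      show (((A + B) (Pc x) : ↥W) : X) = ((A (Pc x) : ↥W) : X) + ((B (Pc x) : ↥W) : X)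
      rw [ContinuousLinearMap.add_apply]
      push_cast
      ring
    have hG_smul : ∀ (c : ℝ) A, G (c • A) = c • G A := by
      intro c A
      ext x
      rw [ContinuousLinearMap.smul_apply]
      show (((c • A) (Pc x) : ↥W) : X) = c • ((A (Pc x) : ↥W) : X)
      rw [ContinuousLinearMap.smul_apply]
      push_cast
      ring
    have hG_zero : G 0 = 0 := by
      ext x
      show (((0 : ↥W →L[ℝ] ↥W) (Pc x) : ↥W) : X) = (0 : X →L[ℝ] X) x
      simp
    obtain ⟨θ, hθ⟩ := buildTheta W Z G ψ P hG_one hG_mul hG_add hG_smul hG_zero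
      (fun z => (hZmem _).mp z.2) hGmemZ
    -- θ is surjective
    have hθsurj : Function.Surjective θ := by
      intro B
      have heZ : ∀ y : Y, e y ∈ Z := fun y => (hZmem _).mpr (hee y)
      obtain ⟨g, hg⟩ := hsurj ((Z.subtypeL.comp B).comp (e.codRestrict Z heZ))
      refine ⟨Pc.comp (g.comp W.subtypeL), ?_⟩
      have hGA : G (Pc.comp (g.comp W.subtypeL)) = P * g * P := by
        ext x
        rw [hG_apply]
        simp [ContinuousLinearMap.mul_apply, hPc_apply]
      ext z
      rw [hθ, hGA, map_mul, map_mul]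
      rw [ContinuousLinearMap.mul_apply, ContinuousLinearMap.mul_apply]
      rw [show (ψ P) (z : Y) = e (z : Y) from rfl, (hZmem _).mp z.2, hg]
      have hecz : e.codRestrict Z heZ (z : Y) = z :=
        Subtype.ext (by
          rw [ContinuousLinearMap.coe_codRestrict_apply]
          exact (hZmem _).mp z.2)
      rw [ContinuousLinearMap.comp_apply, ContinuousLinearMap.comp_apply, hecz]
      rw [Submodule.subtypeL_apply]
      show e ((B z : ↥Z) : Y) = _
      exact (hZmem _).mp (B z).2
    have hθinj := hSHAI ↥Z θ hθsurj
    clear_value G Pc Z e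
    -- get a nonzero element of ker ψ
    rw [Function.not_injective_iff] at hninj
    obtain ⟨s, t, hst, hne⟩ := hninj
    obtain ⟨g0, hg0, hg0ne⟩ : ∃ g0 : X →L[ℝ] X, ψ g0 = 0 ∧ g0 ≠ 0 :=
      ⟨s - t, by rw [map_sub, hst, sub_self], sub_ne_zero.mpr hne⟩
    obtain ⟨x0, hx0⟩ : ∃ x, g0 x ≠ 0 := by
      by_contra hcon; push_neg at hcon
      exact hg0ne (ContinuousLinearMap.ext fun x => by simp [hcon x])
    obtain ⟨w0x, hw0mem, hw0ne⟩ := (Submodule.ne_bot_iff W).mp hW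
    obtain ⟨f, hf⟩ : ∃ f : X →L[ℝ] ℝ, f (g0 x0) = 1 := by
      obtain ⟨f0, -, hf0⟩ := exists_dual_vector ℝ (g0 x0) (norm_ne_zero_iff.mpr hx0)
      refine ⟨‖g0 x0‖⁻¹ • f0, ?_⟩
      rw [ContinuousLinearMap.smul_apply, hf0]
      simp [inv_mul_cancel₀ (norm_ne_zero_iff.mpr hx0)]
    obtain ⟨h, hh⟩ : ∃ h : X →L[ℝ] ℝ, h w0x = 1 := by
      obtain ⟨h0, -, hh0⟩ := exists_dual_vector ℝ w0x (norm_ne_zero_iff.mpr hw0ne)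
      refine ⟨‖w0x‖⁻¹ • h0, ?_⟩
      rw [ContinuousLinearMap.smul_apply, hh0]
      simp [inv_mul_cancel₀ (norm_ne_zero_iff.mpr hw0ne)]
    obtain ⟨a, ha⟩ : ∃ a : X →L[ℝ] X, ∀ x, a x = f x • w0x := ⟨f.smulRight w0x, fun x => rfl⟩
    obtain ⟨b, hb⟩ : ∃ b : X →L[ℝ] X, ∀ x, b x = h x • x0 := ⟨h.smulRight x0, fun x => rfl⟩
    obtain ⟨A, hGA2, hAw⟩ : ∃ A : ↥W →L[ℝ] ↥W,
        G A = (P * a) * g0 * (b * P) ∧ ((A ⟨w0x, hw0mem⟩ : ↥W) : X) = w0x := by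
      refine ⟨Pc.comp ((a.comp (g0.comp b)).comp W.subtypeL), ?_, ?_⟩
      · ext x
        rw [hG_apply]
        simp only [ContinuousLinearMap.comp_apply, Submodule.subtypeL_apply,
          ContinuousLinearMap.mul_apply, hPc_apply]
      · show ((Pc (a (g0 (b w0x))) : ↥W) : X) = w0x
        rw [hb, hh, one_smul, ha, hf, one_smul, hPc_apply]
        exact hPfix _ hw0mem
    have hψGA : ψ (G A) = 0 := by
      rw [hGA2, map_mul, map_mul, hg0, mul_zero, zero_mul]
    have hθA : θ A = 0 := by
      ext z
      rw [hθ, hψGA]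
      simp
    have hA0 : A = 0 := hθinj (by rw [hθA, map_zero])
    rw [hA0] at hAw
    simp only [ContinuousLinearMap.zero_apply, ZeroMemClass.coe_zero] at hAw
    exact hw0ne hAw.symm
  clear_value G Pc
  -- Step 2 : the generators lie in ker ψ
  have hgen : ∀ {g : X →L[ℝ] X},
      (∃ (T : X →L[ℝ] ↥W) (S : ↥W →L[ℝ] X), g = S.comp T) → ψ g = 0 := by
    rintro g ⟨T, S, rfl⟩
    have hfac : S.comp T = (S.comp Pc) * P * (W.subtypeL.comp T) := by
      ext x
      rw [ContinuousLinearMap.mul_apply, ContinuousLinearMap.mul_apply]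
      simp only [ContinuousLinearMap.comp_apply, Submodule.subtypeL_apply]
      congr 1
      apply Subtype.ext
      rw [hPc_apply, hPP]
      exact (hPι (T x)).symm
    rw [hfac, map_mul, map_mul, hψP, mul_zero, zero_mul]
  have hspan : (Submodule.span ℝ {g : X →L[ℝ] X |
      ∃ (T : X →L[ℝ] W) (S : (W : Type u) →L[ℝ] X), g = S.comp T}) ≤
      LinearMap.ker ψ.toLinearMap :=
    Submodule.span_le.mpr fun g hg => LinearMap.mem_ker.mpr (hgen hg)
  -- Step 3 : closure, via invertibility of small perturbations of 1
  intro g hg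
  by_contra hune
  obtain ⟨y0, hy0⟩ : ∃ y, ψ g y ≠ 0 := by
    by_contra hcon; push_neg at hcon
    exact hune (ContinuousLinearMap.ext fun y => by simp [hcon y])
  obtain ⟨f0, -, hf0⟩ := exists_dual_vector ℝ (ψ g y0) (norm_ne_zero_iff.mpr hy0)
  set f : Y →L[ℝ] ℝ := ‖ψ g y0‖⁻¹ • f0 with hfdef
  have hf : f (ψ g y0) = 1 := by
    rw [hfdef, ContinuousLinearMap.smul_apply, hf0]
    simp [inv_mul_cancel₀ (norm_ne_zero_iff.mpr hy0)]
  set b : Y →L[ℝ] Y := f.smulRight y0 with hbdef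
  obtain ⟨a, ha⟩ := hsurj b
  set M : Submodule ℝ (X →L[ℝ] X) := Submodule.span ℝ {g : X →L[ℝ] X |
      ∃ (T : X →L[ℝ] W) (S : (W : Type u) →L[ℝ] X), g = S.comp T} with hMdef
  have hmap : M.map (LinearMap.mulLeft ℝ a) ≤ M := by
    rw [hMdef, Submodule.map_span]
    apply Submodule.span_le.mpr
    rintro _ ⟨g', ⟨T, S, rfl⟩, rfl⟩
    refine Submodule.subset_span ⟨T, a.comp S, ?_⟩
    ext x
    simp [LinearMap.mulLeft_apply, ContinuousLinearMap.mul_apply]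
  have hag : a * g ∈ closure (M : Set (X →L[ℝ] X)) := by
    have hcont : Continuous fun t : X →L[ℝ] X => a * t := continuous_const.mul continuous_id
    have h1 : a * g ∈ closure ((fun t : X →L[ℝ] X => a * t) '' (M : Set (X →L[ℝ] X))) :=
      image_closure_subset_closure_image hcont ⟨g, hg, rfl⟩
    refine closure_mono ?_ h1
    rintro _ ⟨t, ht, rfl⟩
    exact hmap ⟨t, ht, rfl⟩
  obtain ⟨k, hk, hdist⟩ := Metric.mem_closure_iff.mp hag 1 one_pos
  have hknorm : ‖a * g - k‖ < 1 := by rwa [dist_eq_norm] at hdist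
  have hkker : ψ k = 0 := LinearMap.mem_ker.mp (hspan hk)
  have hunit : IsUnit ((1 : X →L[ℝ] X) - (a * g - k)) := ⟨Units.oneSub _ hknorm, rfl⟩
  have hunit2 : IsUnit ((1 : Y →L[ℝ] Y) - b * ψ g) := by
    have h2 := hunit.map ψ
    rwa [map_sub, map_one, map_sub, map_mul, hkker, sub_zero, ha] at h2
  obtain ⟨v, hv⟩ := hunit2
  have hz : ((1 : Y →L[ℝ] Y) - b * ψ g) y0 = 0 := by
    rw [ContinuousLinearMap.sub_apply, ContinuousLinearMap.one_apply,
      ContinuousLinearMap.mul_apply, hbdef, ContinuousLinearMap.smulRight_apply, hf,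
      one_smul, sub_self]
  have hy00 : y0 = 0 := by
    have h3 := DFunLike.congr_fun v.inv_mul y0
    rw [ContinuousLinearMap.mul_apply, ContinuousLinearMap.one_apply, hv, hz,
      map_zero] at h3
    exact h3.symm
  exact hy0 (by rw [hy00, map_zero])
end
end
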